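/- Variational aleatoric variance upper bound: under the conditional independence y* ⊥ (Z, U, D) | (x*, θ), the estimator V_a^Σ(y*|x*, Z, D) := E_{p(U|Z,D)}[Var(y* | x*, U, Z, D)] satisfies V_a^Σ(y*|x*, Z, D) ≥ E_{p(θ|D)}[Var(y* | x*, θ)]. -/
import Mathlib


open scoped BigOperators

/-- Mean of a real-valued random variable with pmf `q` and value map `val`. -/
noncomputable def pmfMean {α : Type*} [Fintype α] (q : α → ℝ) (val : α → ℝ) : ℝ :=
  ∑ a, q a * val a

/-- Variance of a real-valued random variable with pmf `q` and value map `val`. -/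
noncomputable def pmfVar {α : Type*} [Fintype α] (q : α → ℝ) (val : α → ℝ) : ℝ :=
  ∑ a, q a * (val a - pmfMean q val) ^ 2

/-- Shift identity: second moment about `c` equals variance plus squared bias. -/
lemma pmf_shift {α : Type*} [Fintype α] (q : α → ℝ) (hq1 : ∑ a, q a = 1)
    (val : α → ℝ) (c : ℝ) :
    ∑ a, q a * (val a - c) ^ 2 = pmfVar q val + (pmfMean q val - c) ^ 2 := by
  have key : ∀ d : ℝ, ∑ a, q a * (val a - d) ^ 2
      = (∑ a, q a * val a ^ 2) - 2 * d * pmfMean q val + d ^ 2 := by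
    intro d
    have : ∑ a, q a * (val a - d) ^ 2
        = ∑ a, (q a * val a ^ 2 - 2 * d * (q a * val a) + d ^ 2 * q a) :=
      Finset.sum_congr rfl (fun a _ => by ring)
    rw [this, Finset.sum_add_distrib, Finset.sum_sub_distrib, ← Finset.mul_sum,
      ← Finset.mul_sum, hq1, mul_one]
    rfl
  have hv : pmfVar q val
      = (∑ a, q a * val a ^ 2) - 2 * pmfMean q val * pmfMean q val
        + pmfMean q val ^ 2 := key (pmfMean q val)
  rw [key c, hv]
  ring

/-- Variational aleatoric variance upper bound: under the latent-parameter model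
`θ ~ p(θ|D)`, `y* | θ ~ p(y*|x*,θ)` (independently of `Z`, `U` and `D` given `θ`),
`U | θ ~ p(U|Z,θ)`, the estimator
`V_a^Σ = E_{p(U|Z,D)}[Var(y*|x*,U,Z,D)]` satisfies
`V_a^Σ ≥ E_{p(θ|D)}[Var(y*|x*,θ)]`. -/
theorem variational_aleatoric_variance_upper_bound
    {Θ Y U : Type*} [Fintype Θ] [Fintype Y] [Fintype U]
    (val : Y → ℝ)
    (pθ : Θ → ℝ) (py : Θ → Y → ℝ) (pu : Θ → U → ℝ)
    (hpθ0 : ∀ θ, 0 ≤ pθ θ) (hpθ1 : ∑ θ, pθ θ = 1)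
    (hpy0 : ∀ θ y, 0 ≤ py θ y) (hpy1 : ∀ θ, ∑ y, py θ y = 1)
    (hpu0 : ∀ θ u, 0 < pu θ u) (hpu1 : ∀ θ, ∑ u, pu θ u = 1)
    (pU : U → ℝ) (hpU : ∀ u, pU u = ∑ θ, pθ θ * pu θ u)
    (post : U → Θ → ℝ) (hpost : ∀ u θ, post u θ = pθ θ * pu θ u / pU u)
    (pred : U → Y → ℝ) (hpred : ∀ u y, pred u y = ∑ θ, py θ y * post u θ) :
    (∑ θ, pθ θ * pmfVar (py θ) val) ≤ ∑ u, pU u * pmfVar (pred u) val := by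
  obtain ⟨θ0, hθ0⟩ : ∃ θ0, 0 < pθ θ0 := by
    by_contra h
    push_neg at h
    have hz : ∑ θ, pθ θ = 0 :=
      Finset.sum_eq_zero fun θ _ => le_antisymm (h θ) (hpθ0 θ)
    rw [hpθ1] at hz; norm_num at hz
  have hpU' : ∀ u, 0 < pU u := by
    intro u
    rw [hpU u]
    have h1 : pθ θ0 * pu θ0 u ≤ ∑ θ, pθ θ * pu θ u :=
      Finset.single_le_sum (fun θ _ => mul_nonneg (hpθ0 θ) (hpu0 θ u).le)
        (Finset.mem_univ θ0)
    exact lt_of_lt_of_le (mul_pos hθ0 (hpu0 θ0 u)) h1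
  have hpost0 : ∀ u θ, 0 ≤ post u θ := fun u θ => by
    rw [hpost]
    exact div_nonneg (mul_nonneg (hpθ0 θ) (hpu0 θ u).le) (hpU' u).le
  have hkey : ∀ u, ∑ θ, post u θ * pmfVar (py θ) val ≤ pmfVar (pred u) val := by
    intro u
    have hswap : pmfVar (pred u) val
        = ∑ θ, post u θ * ∑ y, py θ y * (val y - pmfMean (pred u) val) ^ 2 := by
      simp only [pmfVar]
      calc ∑ y, pred u y * (val y - pmfMean (pred u) val) ^ 2
          = ∑ y, ∑ θ, py θ y * post u θ * (val y - pmfMean (pred u) val) ^ 2 := by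
            refine Finset.sum_congr rfl fun y _ => ?_
            rw [hpred, Finset.sum_mul]
        _ = ∑ θ, ∑ y, py θ y * post u θ * (val y - pmfMean (pred u) val) ^ 2 :=
            Finset.sum_comm
        _ = ∑ θ, post u θ * ∑ y, py θ y * (val y - pmfMean (pred u) val) ^ 2 := by
            refine Finset.sum_congr rfl fun θ _ => ?_
            rw [Finset.mul_sum]
            exact Finset.sum_congr rfl fun y _ => by ring
    rw [hswap]
    refine Finset.sum_le_sum fun θ _ => ?_
    refine mul_le_mul_of_nonneg_left ?_ (hpost0 u θ)
    rw [pmf_shift (py θ) (hpy1 θ) val]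
    exact le_add_of_nonneg_right (sq_nonneg _)
  have hfinal : ∑ u, pU u * ∑ θ, post u θ * pmfVar (py θ) val
      = ∑ θ, pθ θ * pmfVar (py θ) val := by
    have h1 : ∀ u, pU u * ∑ θ, post u θ * pmfVar (py θ) val
        = ∑ θ, pθ θ * pu θ u * pmfVar (py θ) val := by
      intro u
      rw [Finset.mul_sum]
      refine Finset.sum_congr rfl fun θ _ => ?_
      rw [hpost]
      rw [div_mul_eq_mul_div, mul_div_assoc']
      exact mul_div_cancel_left₀ _ (hpU' u).ne'
    rw [Finset.sum_congr rfl fun u _ => h1 u, Finset.sum_comm]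
    refine Finset.sum_congr rfl fun θ _ => ?_
    calc ∑ u, pθ θ * pu θ u * pmfVar (py θ) val
        = pθ θ * pmfVar (py θ) val * ∑ u, pu θ u := by
          rw [Finset.mul_sum]
          exact Finset.sum_congr rfl fun u _ => by ring
      _ = pθ θ * pmfVar (py θ) val := by rw [hpu1, mul_one]
  rw [← hfinal]
  exact Finset.sum_le_sum fun u _ =>
    mul_le_mul_of_nonneg_left (hkey u) (hpU' u).le
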